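/- Let K ⊂ ℝᵈ be a convex body whose centroid is at the origin, and let δ ≤ 8^{−d}. Then (1 − 4·δ^{1/d})·K ⊆ K_δ. -/

import Mathlib

open MeasureTheory Metric Set
open scoped RealInnerProductSpace ENNReal Pointwise

noncomputable section

/-- Euclidean space `ℝᵈ`. -/
abbrev Euc (d : ℕ) := EuclideanSpace ℝ (Fin d)

/-- A convex body: a compact convex set with nonempty interior. -/
def IsConvexBody {d : ℕ} (K : Set (Euc d)) : Prop :=
  IsCompact K ∧ Convex ℝ K ∧ (interior K).Nonempty

/-- The convex floating body `K_δ`. -/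
def floatingBody {d : ℕ} (K : Set (Euc d)) (δ : ℝ) : Set (Euc d) :=
  ⋂₀ {H : Set (Euc d) | ∃ θ : Euc d, ∃ t : ℝ, ‖θ‖ = 1 ∧
      H = {x : Euc d | t ≤ ⟪x, θ⟫} ∧
      ENNReal.ofReal (1 - δ) * volume K ≤ volume (H ∩ K)}

/-- Homothety image volume estimate: if the homothety with ratio `r ≥ 0` centered at `z`
maps `A` into `B`, then `r^d · vol A ≤ vol B`. -/
lemma cone_vol {d : ℕ} {A B : Set (Euc d)} {z : Euc d} {r : ℝ} (hr : 0 ≤ r)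
    (hB : ∀ y ∈ A, r • (y - z) + z ∈ B) :
    ENNReal.ofReal (r ^ d) * volume A ≤ volume B := by
  have himg : AffineMap.homothety z r '' A ⊆ B := by
    rintro _ ⟨y, hy, rfl⟩
    simpa [AffineMap.homothety_apply, vsub_eq_sub, vadd_eq_add] using hB y hy
  calc ENNReal.ofReal (r ^ d) * volume A
      = volume (AffineMap.homothety z r '' A) := by
        rw [Measure.addHaar_image_homothety, finrank_euclideanSpace_fin,
          abs_of_nonneg (pow_nonneg hr d)]
    _ ≤ volume B := measure_mono himg

lemma cone_vol_real {d : ℕ} {A B : Set (Euc d)} {z : Euc d} {r : ℝ} (hr : 0 ≤ r)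
    (hB : ∀ y ∈ A, r • (y - z) + z ∈ B) (hBfin : volume B ≠ ⊤) :
    r ^ d * (volume A).toReal ≤ (volume B).toReal := by
  have h := ENNReal.toReal_mono hBfin (cone_vol hr hB)
  rwa [ENNReal.toReal_mul, ENNReal.toReal_ofReal (pow_nonneg hr d)] at h

/-- If the centroid of `K` is `0` and `θ` is a unit vector, then the minimum of `⟪·, θ⟫`
on `K` is negative. -/
lemma min_neg {d : ℕ} {K : Set (Euc d)} (hKc : IsCompact K) (hKi : (interior K).Nonempty)
    {θ : Euc d} (hθ : ‖θ‖ = 1)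
    (hgint : (∫ y in K, ⟪y, θ⟫) = 0)
    {za : Euc d} (hmin : ∀ y ∈ K, ⟪za, θ⟫ ≤ ⟪y, θ⟫) :
    ⟪za, θ⟫ < 0 := by
  set g : Euc d → ℝ := fun y => ⟪y, θ⟫ with hg
  have hgcont : Continuous g := continuous_id.inner continuous_const
  by_contra hcon
  push_neg at hcon
  -- g ≥ 0 on K
  have hge : ∀ y ∈ K, 0 ≤ g y := fun y hy => le_trans hcon (hmin y hy)
  obtain ⟨x₀, hx₀⟩ := hKi
  obtain ⟨ε, hε, hball⟩ := Metric.isOpen_iff.1 isOpen_interior x₀ hx₀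
  set x₁ : Euc d := x₀ + (ε / 2) • θ with hx₁def
  have hx₁ : x₁ ∈ interior K := by
    apply hball
    simp only [Metric.mem_ball, dist_eq_norm, hx₁def]
    rw [add_sub_cancel_left, norm_smul, hθ]
    simp only [Real.norm_eq_abs, abs_of_pos (by linarith : (0:ℝ) < ε / 2), mul_one]
    linarith
  have hgx₁ : ε / 2 ≤ g x₁ := by
    have : g x₁ = g x₀ + ε / 2 := by
      simp only [hg, hx₁def, inner_add_left, real_inner_smul_left]
      rw [real_inner_self_eq_norm_sq, hθ]
      ring
    have h0 : 0 ≤ g x₀ := hge x₀ (interior_subset hx₀)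
    linarith
  -- a ball around x₁ where g ≥ ε/4
  set U : Set (Euc d) := Metric.ball x₁ (ε / 4) with hUdef
  have hUK : U ⊆ K := by
    intro y hy
    apply interior_subset; apply hball
    have h1 : dist y x₁ < ε / 4 := hy
    have h2 : dist x₁ x₀ ≤ ε / 2 := by
      simp only [hx₁def, dist_eq_norm, add_sub_cancel_left, norm_smul, hθ]
      simp only [Real.norm_eq_abs, abs_of_pos (by linarith : (0:ℝ) < ε / 2), mul_one,
        le_refl]
    calc dist y x₀ ≤ dist y x₁ + dist x₁ x₀ := dist_triangle _ _ _
      _ < ε := by linarith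
  have hUg : ∀ y ∈ U, ε / 4 ≤ g y := by
    intro y hy
    have h1 : ‖y - x₁‖ < ε / 4 := by
      rw [← dist_eq_norm]; exact hy
    have h2 : |g y - g x₁| ≤ ‖y - x₁‖ := by
      have : g y - g x₁ = ⟪y - x₁, θ⟫ := by simp [hg, inner_sub_left]
      rw [this]
      calc |⟪y - x₁, θ⟫| ≤ ‖y - x₁‖ * ‖θ‖ := abs_real_inner_le_norm _ _
        _ = ‖y - x₁‖ := by rw [hθ, mul_one]
    have := abs_le.1 h2
    linarith
  have hKint : IntegrableOn g K := hgcont.continuousOn.integrableOn_compact hKc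
  have hUvol : 0 < (volume U).toReal := by
    refine ENNReal.toReal_pos (ne_of_gt ?_) ?_
    · exact Metric.measure_ball_pos _ _ (by linarith)
    · exact ((measure_mono hUK).trans_lt hKc.measure_lt_top).ne
  -- now derive the contradiction: the integral is strictly positive
  have hsplit : (ε / 4) * (volume U).toReal ≤ ∫ y in U, g y := by
    refine setIntegral_ge_of_const_le_real measurableSet_ball
      ((measure_mono hUK).trans_lt hKc.measure_lt_top).ne hUg (hKint.mono_set hUK)
  have hmono : (∫ y in U, g y) ≤ ∫ y in K, g y := by
    refine setIntegral_mono_set hKint ?_ (HasSubset.Subset.eventuallyLE hUK)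
    filter_upwards [ae_restrict_mem hKc.isClosed.measurableSet] with y hy
    exact hge y hy
  rw [hgint] at hmono
  nlinarith


/-- Weak Grünbaum inequality: if the centroid of the convex body `K` is at the origin, the
half of `K` below any hyperplane through the origin has volume at least `4⁻ᵈ vol K`. -/
lemma grunbaum {d : ℕ} {K : Set (Euc d)} (hKc : IsCompact K) (hKconv : Convex ℝ K)
    {θ : Euc d}
    (hgint : (∫ y in K, ⟪y, θ⟫) = 0)
    {za zb : Euc d} (hza : za ∈ K) (hzb : zb ∈ K)
    (hmin : ∀ y ∈ K, ⟪za, θ⟫ ≤ ⟪y, θ⟫) (hmax : ∀ y ∈ K, ⟪y, θ⟫ ≤ ⟪zb, θ⟫)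
    (ha : ⟪za, θ⟫ < 0) (hb : 0 < ⟪zb, θ⟫) :
    (4 : ℝ)⁻¹ ^ d * (volume K).toReal ≤ (volume (K ∩ {y | ⟪y, θ⟫ ≤ 0})).toReal := by
  have hgcont : Continuous fun y : Euc d => ⟪y, θ⟫ := continuous_id.inner continuous_const
  set a : ℝ := ⟪za, θ⟫
  set b : ℝ := ⟪zb, θ⟫
  have hba : 0 < b - a := by linarith
  have hKm : MeasurableSet K := hKc.isClosed.measurableSet
  have hfin : ∀ A : Set (Euc d), A ⊆ K → volume A ≠ ⊤ :=
    fun A hA => ((measure_mono hA).trans_lt hKc.measure_lt_top).ne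
  set V : ℝ := (volume K).toReal with hVdef
  set V₀ : ℝ := (volume (K ∩ {y | ⟪y, θ⟫ ≤ 0})).toReal with hV0def
  have hVnn : 0 ≤ V := ENNReal.toReal_nonneg
  have hV0nn : 0 ≤ V₀ := ENNReal.toReal_nonneg
  -- membership helper
  have hmem : ∀ z ∈ K, ∀ r : ℝ, 0 ≤ r → r ≤ 1 → ∀ y ∈ K, r • (y - z) + z ∈ K := by
    intro z hz r hr0 hr1 y hy
    have h := hKconv hy hz hr0 (by linarith : (0:ℝ) ≤ 1 - r) (by ring)
    have : r • (y - z) + z = r • y + (1 - r) • z := by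
      rw [smul_sub, sub_smul, one_smul]; abel
    rw [this]; exact h
  have hlevel : ∀ z y : Euc d, ∀ r : ℝ,
      ⟪r • (y - z) + z, θ⟫ = r * (⟪y, θ⟫ - ⟪z, θ⟫) + ⟪z, θ⟫ := by
    intro z y r
    rw [inner_add_left, real_inner_smul_left, inner_sub_left]
  rcases le_or_gt (b - a) (4 * (-a)) with h1 | h1
  · -- case 1 : the minimum is far from the origin hyperplane
    set r : ℝ := (-a) / (b - a) with hrdef
    have hr0 : 0 ≤ r := div_nonneg (by linarith) hba.le
    have hr1 : r ≤ 1 := by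
      rw [div_le_one hba]; linarith
    have hr4 : (4:ℝ)⁻¹ ≤ r := by
      rw [le_div_iff₀ hba]; linarith
    have hB : ∀ y ∈ K, r • (y - za) + za ∈ K ∩ {y | ⟪y, θ⟫ ≤ 0} := by
      intro y hy
      refine ⟨hmem za hza r hr0 hr1 y hy, ?_⟩
      simp only [Set.mem_setOf_eq]
      rw [hlevel za y r]
      have hy' : ⟪y, θ⟫ ≤ b := hmax y hy
      have h2 : r * (⟪y, θ⟫ - a) ≤ r * (b - a) :=
        mul_le_mul_of_nonneg_left (by linarith) hr0
      have h3 : r * (b - a) = -a := by rw [hrdef]; field_simp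
      linarith
    have hcone := cone_vol_real hr0 hB (hfin _ Set.inter_subset_left)
    have hpow : (4:ℝ)⁻¹ ^ d ≤ r ^ d := pow_le_pow_left₀ (by norm_num) hr4 d
    calc (4:ℝ)⁻¹ ^ d * V ≤ r ^ d * V := by
          apply mul_le_mul_of_nonneg_right hpow hVnn
      _ ≤ V₀ := hcone
  · -- case 2 : use the centroid condition
    have hb3a : 3 * (-a) < b := by linarith
    set V₁ : ℝ := (volume (K ∩ {y | 0 ≤ ⟪y, θ⟫})).toReal with hV1def
    have hV1nn : 0 ≤ V₁ := ENNReal.toReal_nonneg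
    -- step A : V₁ ≥ (3/4)^d V
    have hstepA : (3/4 : ℝ)^d * V ≤ V₁ := by
      set r : ℝ := b / (b - a) with hrdef
      have hr0 : 0 ≤ r := div_nonneg hb.le hba.le
      have hr1 : r ≤ 1 := by rw [div_le_one hba]; linarith
      have hr34 : (3/4 : ℝ) ≤ r := by rw [le_div_iff₀ hba]; linarith
      have hB : ∀ y ∈ K, r • (y - zb) + zb ∈ K ∩ {y | 0 ≤ ⟪y, θ⟫} := by
        intro y hy
        refine ⟨hmem zb hzb r hr0 hr1 y hy, ?_⟩
        simp only [Set.mem_setOf_eq]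
        rw [hlevel zb y r]
        have hy' : a ≤ ⟪y, θ⟫ := hmin y hy
        have h2 : r * (a - b) ≤ r * (⟪y, θ⟫ - b) :=
          mul_le_mul_of_nonneg_left (by linarith) hr0
        have h3 : r * (b - a) = b := by rw [hrdef]; field_simp
        nlinarith
      have hcone := cone_vol_real hr0 hB (hfin _ Set.inter_subset_left)
      have hpow : (3/4:ℝ) ^ d ≤ r ^ d := pow_le_pow_left₀ (by norm_num) hr34 d
      calc (3/4:ℝ)^d * V ≤ r ^ d * V := mul_le_mul_of_nonneg_right hpow hVnn
        _ ≤ V₁ := hcone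
    -- step B : vol (K ∩ {b/2 ≤ g}) ≥ (1/2)^d V₁
    set W : ℝ := (volume (K ∩ {y | b/2 ≤ ⟪y, θ⟫})).toReal with hWdef
    have hWnn : 0 ≤ W := ENNReal.toReal_nonneg
    have hstepB : (1/2 : ℝ)^d * V₁ ≤ W := by
      have hB : ∀ y ∈ K ∩ {y | 0 ≤ ⟪y, θ⟫},
          (1/2 : ℝ) • (y - zb) + zb ∈ K ∩ {y | b/2 ≤ ⟪y, θ⟫} := by
        rintro y ⟨hy, hy0⟩
        simp only [Set.mem_setOf_eq] at hy0
        refine ⟨hmem zb hzb _ (by norm_num) (by norm_num) y hy, ?_⟩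
        simp only [Set.mem_setOf_eq]
        rw [hlevel zb y (1/2)]
        linarith
      exact cone_vol_real (by norm_num) hB (hfin _ Set.inter_subset_left)
    -- step C : the centroid condition
    have hKint : IntegrableOn (fun y : Euc d => ⟪y, θ⟫) K :=
      hgcont.continuousOn.integrableOn_compact hKc
    have hK0m : MeasurableSet (K ∩ {y : Euc d | ⟪y, θ⟫ < 0}) :=
      hKm.inter (measurableSet_lt hgcont.measurable measurable_const)
    have hK1m : MeasurableSet (K ∩ {y : Euc d | 0 ≤ ⟪y, θ⟫}) :=
      hKm.inter (measurableSet_le measurable_const hgcont.measurable)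
    have hunion : (K ∩ {y : Euc d | ⟪y, θ⟫ < 0}) ∪ (K ∩ {y : Euc d | 0 ≤ ⟪y, θ⟫}) = K := by
      ext y
      simp only [Set.mem_union, Set.mem_inter_iff, Set.mem_setOf_eq]
      constructor
      · rintro (⟨h, _⟩ | ⟨h, _⟩) <;> exact h
      · intro h
        rcases lt_or_ge (⟪y, θ⟫ : ℝ) 0 with h' | h'
        · exact Or.inl ⟨h, h'⟩
        · exact Or.inr ⟨h, h'⟩
    have hdisj : Disjoint (K ∩ {y : Euc d | ⟪y, θ⟫ < 0}) (K ∩ {y : Euc d | 0 ≤ ⟪y, θ⟫}) := by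
      rw [Set.disjoint_left]
      rintro y ⟨_, h1⟩ ⟨_, h2⟩
      simp only [Set.mem_setOf_eq] at h1 h2
      linarith
    have hsplit : (∫ y in K ∩ {y : Euc d | ⟪y, θ⟫ < 0}, ⟪y, θ⟫)
        + (∫ y in K ∩ {y : Euc d | 0 ≤ ⟪y, θ⟫}, ⟪y, θ⟫) = 0 := by
      rw [← setIntegral_union hdisj hK1m (hKint.mono_set Set.inter_subset_left)
        (hKint.mono_set Set.inter_subset_left), hunion]
      exact hgint
    -- bound on the negative part
    have hI0 : a * V₀ ≤ ∫ y in K ∩ {y : Euc d | ⟪y, θ⟫ < 0}, ⟪y, θ⟫ := by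
      have h1 : a * (volume (K ∩ {y : Euc d | ⟪y, θ⟫ < 0})).toReal
          ≤ ∫ y in K ∩ {y : Euc d | ⟪y, θ⟫ < 0}, ⟪y, θ⟫ :=
        setIntegral_ge_of_const_le_real hK0m (hfin _ Set.inter_subset_left)
          (fun y hy => hmin y hy.1) (hKint.mono_set Set.inter_subset_left)
      have h2 : (volume (K ∩ {y : Euc d | ⟪y, θ⟫ < 0})).toReal ≤ V₀ := by
        apply ENNReal.toReal_mono (hfin _ Set.inter_subset_left)
        apply measure_mono
        refine Set.inter_subset_inter_right _ ?_
        intro y hy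
        have hy' : (⟪y, θ⟫ : ℝ) < 0 := hy
        exact le_of_lt hy'
      nlinarith
    -- bound on the positive part
    have hI1 : (b/2) * W ≤ ∫ y in K ∩ {y : Euc d | 0 ≤ ⟪y, θ⟫}, ⟪y, θ⟫ := by
      have h1 : (b/2) * W ≤ ∫ y in K ∩ {y : Euc d | b/2 ≤ ⟪y, θ⟫}, ⟪y, θ⟫ :=
        setIntegral_ge_of_const_le_real
          (hKm.inter (measurableSet_le measurable_const hgcont.measurable))
          (hfin _ Set.inter_subset_left) (fun y hy => hy.2)
          (hKint.mono_set Set.inter_subset_left)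
      have h2 : (∫ y in K ∩ {y : Euc d | b/2 ≤ ⟪y, θ⟫}, ⟪y, θ⟫)
          ≤ ∫ y in K ∩ {y : Euc d | 0 ≤ ⟪y, θ⟫}, ⟪y, θ⟫ := by
        apply setIntegral_mono_set (hKint.mono_set Set.inter_subset_left)
        · filter_upwards [ae_restrict_mem hK1m] with y hy
          exact hy.2
        · apply HasSubset.Subset.eventuallyLE
          refine Set.inter_subset_inter_right _ ?_
          intro y hy
          have hy' : b/2 ≤ ⟪y, θ⟫ := hy
          show (0:ℝ) ≤ ⟪y, θ⟫
          linarith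
      linarith
    -- combine
    have hkey : (b/2) * W ≤ (-a) * V₀ := by linarith
    have hchain : (b/2) * ((1/2:ℝ)^d * ((3/4:ℝ)^d * V)) ≤ (b/2) * W := by
      apply mul_le_mul_of_nonneg_left _ (by linarith : (0:ℝ) ≤ b/2)
      calc (1/2:ℝ)^d * ((3/4:ℝ)^d * V) ≤ (1/2:ℝ)^d * V₁ := by
            apply mul_le_mul_of_nonneg_left hstepA (by positivity)
        _ ≤ W := hstepB
    have hX : (0:ℝ) ≤ (1/2:ℝ)^d * ((3/4:ℝ)^d * V) := by positivity
    have hfinal : (-a) * ((3/2) * ((1/2:ℝ)^d * ((3/4:ℝ)^d * V))) ≤ (-a) * V₀ := by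
      nlinarith
    have hdiv : (3/2) * ((1/2:ℝ)^d * ((3/4:ℝ)^d * V)) ≤ V₀ :=
      le_of_mul_le_mul_left (by linarith) (by linarith : (0:ℝ) < -a)
    have hpows : (4:ℝ)⁻¹ ^ d ≤ (3/2) * ((1/2:ℝ)^d * (3/4:ℝ)^d) := by
      have h32 : (1:ℝ) ≤ (3/2:ℝ)^d := by
        have := pow_le_pow_left₀ (by norm_num : (0:ℝ) ≤ 1) (by norm_num : (1:ℝ) ≤ 3/2) d
        simpa using this
      have heq : (1/2:ℝ)^d * (3/4:ℝ)^d = (3/2:ℝ)^d * (4:ℝ)⁻¹ ^ d := by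
        rw [← mul_pow, ← mul_pow]; norm_num
      rw [heq]
      nlinarith [pow_nonneg (by norm_num : (0:ℝ) ≤ (4:ℝ)⁻¹) d]
    calc (4:ℝ)⁻¹ ^ d * V ≤ (3/2) * ((1/2:ℝ)^d * (3/4:ℝ)^d) * V :=
          mul_le_mul_of_nonneg_right hpows hVnn
      _ = (3/2) * ((1/2:ℝ)^d * ((3/4:ℝ)^d * V)) := by ring
      _ ≤ V₀ := hdiv

set_option maxHeartbeats 1600000 in
theorem smul_subset_floatingBody
    (d : ℕ) (K : Set (Euc d)) (hK : IsConvexBody K)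
    (hcent : (∫ x in K, x) = (0 : Euc d))
    (δ : ℝ) (hδ0 : 0 < δ) (hδ : δ ≤ (8 : ℝ) ^ (-(d : ℝ))) :
    (1 - 4 * δ ^ ((d : ℝ)⁻¹)) • K ⊆ floatingBody K δ := by
  obtain ⟨hKc, hKconv, hKi⟩ := hK
  rcases Nat.eq_zero_or_pos d with hd0 | hd
  · subst hd0
    intro w _
    simp only [floatingBody, Set.mem_sInter, Set.mem_setOf_eq]
    rintro H ⟨θ, t, hθ, rfl, hvol⟩
    exfalso
    have hθ0 : θ = 0 := Subsingleton.elim θ 0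
    rw [hθ0, norm_zero] at hθ
    norm_num at hθ
  -- from now on `d ≥ 1`
  have hdR : (0:ℝ) < (d:ℝ) := by exact_mod_cast hd
  have hδd : 0 < δ ^ ((d:ℝ)⁻¹) := Real.rpow_pos_of_pos hδ0 _
  have hδd8 : δ ^ ((d:ℝ)⁻¹) ≤ 8⁻¹ := by
    have h := Real.rpow_le_rpow hδ0.le hδ (by positivity : (0:ℝ) ≤ (d:ℝ)⁻¹)
    have h2 : ((8:ℝ) ^ (-(d:ℝ))) ^ ((d:ℝ)⁻¹) = (8:ℝ) ^ (-(1:ℝ)) := by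
      rw [← Real.rpow_mul (by norm_num : (0:ℝ) ≤ 8), neg_mul,
        mul_inv_cancel₀ (ne_of_gt hdR)]
    rw [h2] at h
    rwa [Real.rpow_neg_one] at h
  have hδ1 : δ ≤ 8⁻¹ := by
    have h8 : (8:ℝ) ^ (-(d:ℝ)) ≤ (8:ℝ) ^ (-(1:ℝ)) := by
      apply Real.rpow_le_rpow_of_exponent_le (by norm_num)
      have : (1:ℝ) ≤ (d:ℝ) := by exact_mod_cast hd
      linarith
    rw [Real.rpow_neg_one] at h8
    linarith
  set c : ℝ := 1 - 4 * δ ^ ((d : ℝ)⁻¹) with hcdef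
  have hc2 : 1/2 ≤ c := by rw [hcdef]; linarith
  have hc1 : c < 1 := by rw [hcdef]; nlinarith
  clear_value c
  have hc0 : (0:ℝ) ≤ c := by linarith
  intro w hw
  obtain ⟨x, hx, rfl⟩ := Set.mem_smul_set.1 hw
  simp only [floatingBody, Set.mem_sInter, Set.mem_setOf_eq]
  rintro H ⟨θ, t, hθ, rfl, hvol⟩
  show t ≤ ⟪c • x, θ⟫
  -- extrema of the linear functional on K
  have hgcont : Continuous fun y : Euc d => ⟪y, θ⟫ := continuous_id.inner continuous_const
  obtain ⟨za, hza, hmin'⟩ := hKc.exists_isMinOn ⟨x, hx⟩ hgcont.continuousOn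
  obtain ⟨zb, hzb, hmax'⟩ := hKc.exists_isMaxOn ⟨x, hx⟩ hgcont.continuousOn
  have hmin : ∀ y ∈ K, ⟪za, θ⟫ ≤ ⟪y, θ⟫ := fun y hy => hmin' hy
  have hmax : ∀ y ∈ K, ⟪y, θ⟫ ≤ ⟪zb, θ⟫ := fun y hy => hmax' hy
  -- centroid condition for the functional
  have hidint : IntegrableOn (fun y : Euc d => y) K :=
    continuous_id.continuousOn.integrableOn_compact hKc
  have hgint : (∫ y in K, ⟪y, θ⟫) = 0 := by
    have h1 : (∫ y in K, ⟪y, θ⟫) = ∫ y in K, ⟪θ, y⟫ := by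
      simp only [real_inner_comm]
    rw [h1, integral_inner hidint θ, hcent, inner_zero_right]
  have ha : ⟪za, θ⟫ < 0 := min_neg hKc hKi hθ hgint hmin
  have hb : 0 < ⟪zb, θ⟫ := by
    have hθ' : ‖-θ‖ = 1 := by rwa [norm_neg]
    have hgint' : (∫ y in K, ⟪y, -θ⟫) = 0 := by
      simp only [inner_neg_right]
      rw [integral_neg, hgint, neg_zero]
    have hmin2 : ∀ y ∈ K, ⟪zb, -θ⟫ ≤ ⟪y, -θ⟫ := by
      intro y hy
      simp only [inner_neg_right]
      exact neg_le_neg (hmax y hy)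
    have := min_neg hKc hKi hθ' hgint' hmin2
    rw [inner_neg_right] at this
    linarith
  set a : ℝ := ⟪za, θ⟫
  set b : ℝ := ⟪zb, θ⟫
  have hgr := grunbaum hKc hKconv hgint hza hzb hmin hmax ha hb
  set V : ℝ := (volume K).toReal with hVdef
  set V₀ : ℝ := (volume (K ∩ {y | ⟪y, θ⟫ ≤ 0})).toReal with hV0def
  have hfin : ∀ A : Set (Euc d), A ⊆ K → volume A ≠ ⊤ :=
    fun A hA => ((measure_mono hA).trans_lt hKc.measure_lt_top).ne
  have hVpos : 0 < V := by
    refine ENNReal.toReal_pos (ne_of_gt ?_) hKc.measure_lt_top.ne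
    calc (0:ℝ≥0∞) < volume (interior K) :=
          (isOpen_interior.measure_pos volume hKi)
      _ ≤ volume K := measure_mono interior_subset
  have hV0pos : 0 < V₀ := lt_of_lt_of_le (by positivity) hgr
  -- it suffices to show `t ≤ c * a`
  suffices hta : t ≤ c * a by
    rw [real_inner_smul_left]
    have h1 : a ≤ ⟪x, θ⟫ := hmin x hx
    have h2 : c * a ≤ c * ⟪x, θ⟫ := mul_le_mul_of_nonneg_left h1 (by linarith)
    linarith
  by_contra hcon
  push_neg at hcon
  have hca : c * a < 0 := mul_neg_of_pos_of_neg (by linarith) ha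
  set s : ℝ := min 0 ((t + c * a) / 2) with hsdef
  have hs1 : c * a < s := lt_min (by linarith) (by linarith)
  have hs0 : s ≤ 0 := min_le_left _ _
  have hst : s < t := lt_of_le_of_lt (min_le_right _ _) (by linarith)
  clear_value s
  have hα : (0:ℝ) < -a := by linarith
  set r : ℝ := (s - a) / (-a) with hrdef
  clear_value r
  have hcaa : a ≤ c * a := by nlinarith
  have hr0 : 0 ≤ r := by
    rw [hrdef]; exact div_nonneg (by linarith) hα.le
  have hr1 : r ≤ 1 := by
    rw [hrdef, div_le_one hα]; linarith
  have hrbig : 4 * δ ^ ((d : ℝ)⁻¹) < r := by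
    rw [hrdef, lt_div_iff₀ hα]
    have h1c : 4 * δ ^ ((d : ℝ)⁻¹) = 1 - c := by rw [hcdef]; ring
    rw [h1c]
    nlinarith
  -- cone estimate into the cap below level `s < t`
  have hmem : ∀ y ∈ K, r • (y - za) + za ∈ K := by
    intro y hy
    have h := hKconv hy hza hr0 (by linarith : (0:ℝ) ≤ 1 - r) (by ring)
    have heq : r • (y - za) + za = r • y + (1 - r) • za := by
      rw [smul_sub, sub_smul, one_smul]; abel
    rw [heq]; exact h
  have hB : ∀ y ∈ K ∩ {y | ⟪y, θ⟫ ≤ 0},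
      r • (y - za) + za ∈ K ∩ {y | ⟪y, θ⟫ < t} := by
    rintro y ⟨hy, hy0⟩
    have hy0' : (⟪y, θ⟫ : ℝ) ≤ 0 := hy0
    refine ⟨hmem y hy, ?_⟩
    simp only [Set.mem_setOf_eq]
    have hlev : ⟪r • (y - za) + za, θ⟫ = r * (⟪y, θ⟫ - a) + a := by
      rw [inner_add_left, real_inner_smul_left, inner_sub_left]
    rw [hlev]
    have h2 : r * (⟪y, θ⟫ - a) ≤ r * (0 - a) :=
      mul_le_mul_of_nonneg_left (by linarith) hr0
    have h3 : r * (0 - a) = s - a := by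
      rw [hrdef]; field_simp [ne_of_lt ha]; ring
    linarith
  have hcone := cone_vol_real hr0 hB (hfin _ Set.inter_subset_left)
  rw [← hV0def] at hcone
  -- volume of the cap is at most δ V
  have hHm : MeasurableSet {y : Euc d | t ≤ ⟪y, θ⟫} :=
    measurableSet_le measurable_const hgcont.measurable
  have hsum : volume (K ∩ {y : Euc d | t ≤ ⟪y, θ⟫})
      + volume (K \ {y : Euc d | t ≤ ⟪y, θ⟫}) = volume K :=
    measure_inter_add_diff K hHm
  have hdiffeq : K \ {y : Euc d | t ≤ ⟪y, θ⟫} = K ∩ {y | ⟪y, θ⟫ < t} := by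
    ext y
    simp only [Set.mem_diff, Set.mem_inter_iff, Set.mem_setOf_eq, not_le]
  have hsumR : (volume (K ∩ {y : Euc d | t ≤ ⟪y, θ⟫})).toReal
      + (volume (K ∩ {y : Euc d | ⟪y, θ⟫ < t})).toReal = V := by
    have h := congrArg ENNReal.toReal hsum
    rw [ENNReal.toReal_add (hfin _ Set.inter_subset_left)
      (hfin _ Set.diff_subset), hdiffeq] at h
    exact h
  have hvolR : (1 - δ) * V ≤ (volume (K ∩ {y : Euc d | t ≤ ⟪y, θ⟫})).toReal := by
    have h1 := ENNReal.toReal_mono (hfin _ Set.inter_subset_left)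
      (le_trans hvol (le_of_eq (by rw [Set.inter_comm])))
    rwa [ENNReal.toReal_mul, ENNReal.toReal_ofReal (by linarith)] at h1
  have hcap : (volume (K ∩ {y : Euc d | ⟪y, θ⟫ < t})).toReal ≤ δ * V := by nlinarith
  -- final contradiction
  have hrd : (4:ℝ)^d * δ < r ^ d := by
    have h1 : (4 * δ ^ ((d : ℝ)⁻¹)) ^ d < r ^ d := by
      apply pow_lt_pow_left₀ hrbig (by positivity)
      omega
    have h2 : (4 * δ ^ ((d : ℝ)⁻¹)) ^ d = (4:ℝ)^d * δ := by
      rw [mul_pow]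
      congr 1
      rw [← Real.rpow_natCast (δ ^ ((d:ℝ)⁻¹)) d, ← Real.rpow_mul hδ0.le,
        inv_mul_cancel₀ (ne_of_gt hdR), Real.rpow_one]
    rw [← h2]; exact h1
  have h4 : (4:ℝ)^d * (4:ℝ)⁻¹^d = 1 := by
    rw [← mul_pow]; norm_num
  have hV4 : V ≤ (4:ℝ)^d * V₀ := by
    have := mul_le_mul_of_nonneg_left hgr (by positivity : (0:ℝ) ≤ (4:ℝ)^d)
    calc V = (4:ℝ)^d * ((4:ℝ)⁻¹^d * V) := by rw [← mul_assoc, h4, one_mul]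
      _ ≤ (4:ℝ)^d * V₀ := this
  have hfact1 : (4:ℝ)^d * δ * V₀ < r ^ d * V₀ := by
    exact mul_lt_mul_of_pos_right hrd hV0pos
  have hfact2 : δ * V ≤ δ * ((4:ℝ)^d * V₀) := mul_le_mul_of_nonneg_left hV4 hδ0.le
  nlinarith
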